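/- Let G be a finite abelian group with uniform measure μ, and let Λ ⊆ Ĝ be disassociated. Then the family F₁ = {Re u_γ : γ ∈ Λ} is Laplace pseudorandom: for all real coefficients (λ_γ)_{γ∈Λ}, log E_μ exp(Σ_{γ∈Λ} λ_γ Re u_γ) ≤ (1/2) Σ_{γ∈Λ} λ_γ². -/

import Mathlib

open Finset Complex

lemma exp_mul_le' (t x : ℝ) (hx : |x| ≤ 1) :
    Real.exp (t * x) ≤ Real.cosh t + x * Real.sinh t := by
  have h1 : -1 ≤ x := neg_le_of_abs_le hx
  have h2 : x ≤ 1 := le_of_abs_le hx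
  have := convexOn_exp.2 (Set.mem_univ t) (Set.mem_univ (-t))
    (show (0:ℝ) ≤ (1+x)/2 by linarith) (show (0:ℝ) ≤ (1-x)/2 by linarith) (by ring)
  simp only [smul_eq_mul] at this
  have ht : (1+x)/2 * t + (1-x)/2 * (-t) = t * x := by ring
  rw [ht] at this
  rw [Real.cosh_eq, Real.sinh_eq]
  calc Real.exp (t*x) ≤ (1+x)/2 * Real.exp t + (1-x)/2 * Real.exp (-t) := this
    _ = (Real.exp t + Real.exp (-t))/2 + x * ((Real.exp t - Real.exp (-t))/2) := by ring

/-- If `Λ` is a disassociated subset of the dual group of a finite abelian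
group `G` (with uniform measure), then the family `{Re u_γ : γ ∈ Λ}` is
Laplace pseudorandom:
`log 𝔼_μ exp(Σ_{γ∈Λ} λ_γ Re u_γ) ≤ (1/2) Σ_{γ∈Λ} λ_γ²`. -/
theorem dissociated_laplace_pseudorandom
    {G A : Type*} [Fintype G] [Nonempty G] [AddCommGroup A] [DecidableEq A]
    (u : A → G → ℂ)
    (hmul : ∀ γ γ' x, u (γ + γ') x = u γ x * u γ' x)
    (hone : ∀ x, u 0 x = 1)
    (hconj : ∀ γ x, u (-γ) x = (starRingEnd ℂ) (u γ x))
    (hnorm : ∀ γ x, ‖u γ x‖ = 1)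
    (horth : ∀ γ : A, γ ≠ 0 → ∑ x, u γ x = 0)
    (Λ : Finset A)
    (hdis : ∀ ε : A → ℤ, (∀ lam ∈ Λ, ε lam ∈ ({-1, 0, 1} : Set ℤ)) →
      ∑ lam ∈ Λ, ε lam • lam = 0 → ∀ lam ∈ Λ, ε lam = 0)
    (lam : A → ℝ) :
    Real.log ((∑ x, Real.exp (∑ γ ∈ Λ, lam γ * (u γ x).re)) / (Fintype.card G))
      ≤ (1 / 2) * ∑ γ ∈ Λ, (lam γ) ^ 2 := by
  classical
  set T : Finset ℤ := {-1, 0, 1} with hT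
  set c : A → ℤ → ℂ := fun γ j =>
    if j = 0 then (Real.cosh (lam γ) : ℂ) else ((Real.sinh (lam γ) / 2 : ℝ) : ℂ) with hc
  have prod_u : ∀ (s : Finset {a // a ∈ Λ}) (a : {a // a ∈ Λ} → A) (x : G),
      ∏ i ∈ s, u (a i) x = u (∑ i ∈ s, a i) x := by
    intro s a x
    induction s using Finset.induction with
    | empty => simp [hone]
    | insert _ _ h ih => rw [Finset.prod_insert h, Finset.sum_insert h, ih, ← hmul]
  have hre1 : ∀ γ x, |(u γ x).re| ≤ 1 := fun γ x => by
    have h := Complex.abs_re_le_norm (u γ x); rw [hnorm] at h; exact h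
  have hfac : ∀ γ ∈ Λ, ∀ x : G,
      ((Real.cosh (lam γ) : ℂ) + ((u γ x).re : ℂ) * (Real.sinh (lam γ) : ℂ))
        = ∑ j ∈ T, c γ j * u (j • γ) x := by
    intro γ _ x
    have h3 : ((u γ x).re : ℂ) = (u γ x + u (-γ) x) / 2 := by
      rw [hconj, Complex.add_conj]; push_cast; ring
    rw [hT, show ({-1,0,1} : Finset ℤ) = insert (-1) (insert 0 {1}) from rfl,
      Finset.sum_insert (by decide), Finset.sum_insert (by decide), Finset.sum_singleton]
    simp only [hc, if_pos rfl, if_neg (by decide : (-1:ℤ) ≠ 0), if_neg (by decide : (1:ℤ) ≠ 0)]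
    rw [show ((-1:ℤ) • γ) = -γ by simp, one_zsmul, zero_zsmul, hone, h3]
    push_cast; ring
  have S : ∑ x : G, ∏ γ ∈ Λ, ((Real.cosh (lam γ) : ℂ) + ((u γ x).re : ℂ) * (Real.sinh (lam γ) : ℂ))
      = (Fintype.card G : ℂ) * ∏ γ ∈ Λ, (Real.cosh (lam γ) : ℂ) := by
    have expand : ∀ x : G,
        ∏ γ ∈ Λ, ((Real.cosh (lam γ) : ℂ) + ((u γ x).re : ℂ) * (Real.sinh (lam γ) : ℂ))
          = ∑ p ∈ Λ.pi (fun _ => T),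
              (∏ γ ∈ Λ.attach, c γ.1 (p γ.1 γ.2)) * u (∑ γ ∈ Λ.attach, p γ.1 γ.2 • γ.1) x := by
      intro x
      rw [Finset.prod_congr rfl (fun γ hγ => hfac γ hγ x), Finset.prod_sum]
      refine Finset.sum_congr rfl fun p hp => ?_
      rw [Finset.prod_mul_distrib, prod_u]
    simp_rw [expand]
    rw [Finset.sum_comm]
    rw [Finset.sum_eq_single (fun a _ => (0:ℤ))]
    · simp only [zero_zsmul, Finset.sum_const_zero, hone, mul_one, hc, if_pos rfl]
      rw [Finset.prod_attach Λ (fun γ => ((Real.cosh (lam γ) : ℝ) : ℂ))]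
      simp [Finset.sum_const, Finset.card_univ, mul_comm]
    · intro p hp hne
      have hα : (∑ γ ∈ Λ.attach, p γ.1 γ.2 • γ.1) ≠ 0 := by
        intro h0
        apply hne
        set ε : A → ℤ := fun a => if h : a ∈ Λ then p a h else 0 with hε
        have hsum : ∑ a ∈ Λ, ε a • a = 0 := by
          rw [← Finset.sum_attach Λ (fun a => ε a • a), ← h0]
          exact Finset.sum_congr rfl fun γ _ => by rw [hε]; simp [γ.2]
        have hz := hdis ε (fun a ha => by
          rw [hε]; simp only [dif_pos ha]
          have hm := (Finset.mem_pi.1 hp) a ha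
          rw [hT] at hm
          simpa using hm) hsum
        funext a ha
        have h4 : ε a = 0 := hz a ha
        rw [hε] at h4; simpa [dif_pos ha] using h4
      rw [← Finset.mul_sum, horth _ hα, mul_zero]
    · intro h
      exact absurd (Finset.mem_pi.2 fun a ha => by rw [hT]; decide) h
  have Sreal : ∑ x : G, ∏ γ ∈ Λ, (Real.cosh (lam γ) + (u γ x).re * Real.sinh (lam γ))
      = (Fintype.card G : ℝ) * ∏ γ ∈ Λ, Real.cosh (lam γ) := by
    rw [← Complex.ofReal_inj]
    push_cast
    exact_mod_cast S
  have hbound : ∑ x : G, Real.exp (∑ γ ∈ Λ, lam γ * (u γ x).re)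
      ≤ (Fintype.card G : ℝ) * ∏ γ ∈ Λ, Real.cosh (lam γ) := by
    rw [← Sreal]
    refine Finset.sum_le_sum fun x _ => ?_
    rw [Real.exp_sum]
    exact Finset.prod_le_prod (fun γ _ => (Real.exp_nonneg _))
      (fun γ _ => exp_mul_le' (lam γ) ((u γ x).re) (hre1 γ x))
  have hcardpos : (0:ℝ) < Fintype.card G := Nat.cast_pos.2 Fintype.card_pos
  have hpos : 0 < ∑ x : G, Real.exp (∑ γ ∈ Λ, lam γ * (u γ x).re) :=
    Finset.sum_pos (fun x _ => Real.exp_pos _) Finset.univ_nonempty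
  have hdiv : (∑ x : G, Real.exp (∑ γ ∈ Λ, lam γ * (u γ x).re)) / (Fintype.card G : ℝ)
      ≤ ∏ γ ∈ Λ, Real.cosh (lam γ) := by
    rw [div_le_iff₀ hcardpos]
    linarith [hbound]
  calc Real.log ((∑ x, Real.exp (∑ γ ∈ Λ, lam γ * (u γ x).re)) / (Fintype.card G))
      ≤ Real.log (∏ γ ∈ Λ, Real.cosh (lam γ)) := Real.log_le_log (by positivity) hdiv
    _ = ∑ γ ∈ Λ, Real.log (Real.cosh (lam γ)) :=
        Real.log_prod (fun γ _ => (Real.cosh_pos _).ne')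
    _ ≤ ∑ γ ∈ Λ, (lam γ)^2/2 := Finset.sum_le_sum fun γ _ => by
        rw [Real.log_le_iff_le_exp (Real.cosh_pos _)]
        exact Real.cosh_le_exp_half_sq _
    _ = (1/2) * ∑ γ ∈ Λ, (lam γ)^2 := by rw [Finset.mul_sum]; exact Finset.sum_congr rfl fun _ _ => by ring
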